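/- The Kullback–Leibler average of Gaussian densities is Gaussian and is given by the Covariance Intersection fusion rule: let n ≥ 1, let I be a nonempty finite index set, let m_i ∈ ℝ^n and let P_i be symmetric positive definite real n×n matrices (i ∈ I), and let ω_i > 0 be scalars with ∑_{i∈I} ω_i = 1. Define Ω̄ := ∑_{i∈I} ω_i P_i⁻¹ (which is symmetric positive definite), P̄ := Ω̄⁻¹, and m̄ := P̄ (∑_{i∈I} ω_i P_i⁻¹ m_i). Then there exists a constant z > 0 such that for every x ∈ ℝ^n, ∏_{i∈I} N(x; m_i, P_i)^{ω_i} = z · N(x; m̄, P̄); consequently the normalized weighted geometric mean x ↦ ∏_{i∈I} N(x; m_i, P_i)^{ω_i} / ∫_{ℝ^n} ∏_{i∈I} N(y; m_i, P_i)^{ω_i} dy equals N(·; m̄, P̄). -/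

import Mathlib

open Matrix MeasureTheory

/-- The Gaussian density `N(x; m, P)` on `ℝⁿ`. -/
noncomputable def gaussN {n : ℕ} (m : Fin n → ℝ) (P : Matrix (Fin n) (Fin n) ℝ)
    (x : Fin n → ℝ) : ℝ :=
  (((2 * Real.pi) • P).det) ^ (-(1 / 2 : ℝ)) *
    Real.exp (-(1 / 2 : ℝ) * ((x - m) ⬝ᵥ (P⁻¹ *ᵥ (x - m))))

section Helpers

lemma dot_symm' {k : ℕ} {A : Matrix (Fin k) (Fin k) ℝ} (hA : A.IsHermitian)
    (x y : Fin k → ℝ) : x ⬝ᵥ A *ᵥ y = y ⬝ᵥ A *ᵥ x := by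
  have hAt : Aᵀ = A := by
    rw [← Matrix.conjTranspose_eq_transpose_of_trivial]; exact hA
  rw [Matrix.dotProduct_mulVec]
  nth_rewrite 1 [← hAt]
  rw [Matrix.vecMul_transpose, dotProduct_comm]

lemma posDef_smul' {k : ℕ} {A : Matrix (Fin k) (Fin k) ℝ} (hA : A.PosDef) {c : ℝ} (hc : 0 < c) :
    (c • A).PosDef := by
  refine Matrix.PosDef.of_dotProduct_mulVec_pos ?_ (fun x hx => ?_)
  · show (c • A)ᴴ = c • A
    rw [Matrix.conjTranspose_smul, hA.1, star_trivial]
  · rw [Matrix.smul_mulVec, dotProduct_smul]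
    exact mul_pos hc (hA.dotProduct_mulVec_pos hx)

lemma sum_mulVec' {k : ℕ} {I : Type*} [Fintype I] (A : I → Matrix (Fin k) (Fin k) ℝ)
    (x : Fin k → ℝ) : (∑ i, A i) *ᵥ x = ∑ i, A i *ᵥ x := by
  ext j
  simp only [Matrix.mulVec, dotProduct, Finset.sum_apply, Matrix.sum_apply,
    Finset.sum_mul]
  rw [Finset.sum_comm]

lemma dotProduct_sum' {k : ℕ} {I : Type*} [Fintype I] (x : Fin k → ℝ) (v : I → (Fin k → ℝ)) :
    x ⬝ᵥ (∑ i, v i) = ∑ i, x ⬝ᵥ v i := by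
  simp only [dotProduct, Finset.sum_apply, Finset.mul_sum]
  rw [Finset.sum_comm]

lemma posDef_sum' {k : ℕ} {I : Type*} [Fintype I] [Nonempty I]
    (A : I → Matrix (Fin k) (Fin k) ℝ) (hA : ∀ i, (A i).PosDef) :
    (∑ i, A i).PosDef := by
  refine Matrix.PosDef.of_dotProduct_mulVec_pos ?_ (fun x hx => ?_)
  · show (∑ i, A i)ᴴ = ∑ i, A i
    rw [Matrix.conjTranspose_sum]
    exact Finset.sum_congr rfl fun i _ => (hA i).1
  · rw [sum_mulVec', dotProduct_sum']
    exact Finset.sum_pos (fun i _ => (hA i).dotProduct_mulVec_pos hx) Finset.univ_nonempty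

lemma quad_expand' {k : ℕ} {A : Matrix (Fin k) (Fin k) ℝ} (hA : A.IsHermitian)
    (v x : Fin k → ℝ) :
    (x - v) ⬝ᵥ A *ᵥ (x - v) = x ⬝ᵥ A *ᵥ x - 2 * (v ⬝ᵥ A *ᵥ x) + v ⬝ᵥ A *ᵥ v := by
  rw [Matrix.mulVec_sub, sub_dotProduct, dotProduct_sub, dotProduct_sub,
    dot_symm' hA x v]
  ring

lemma gaussN_integral {k : ℕ} (m : Fin k → ℝ) {P : Matrix (Fin k) (Fin k) ℝ} (hP : P.PosDef) :
    ∫ x : Fin k → ℝ, gaussN m P x = 1 := by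
  classical
  have hΩ : (P⁻¹).PosDef := hP.inv
  open scoped MatrixOrder in set Q : Matrix (Fin k) (Fin k) ℝ := CFC.sqrt (P⁻¹) with hQdef
  have hQpsd : Q.PosSemidef := by
    open scoped MatrixOrder in exact Matrix.nonneg_iff_posSemidef.mp (CFC.sqrt_nonneg (P⁻¹))
  have hQQ : Q * Q = P⁻¹ := by
    open scoped MatrixOrder in exact CFC.sqrt_mul_sqrt_self (P⁻¹) (Matrix.nonneg_iff_posSemidef.mpr hΩ.posSemidef)
  have hdet2 : Q.det * Q.det = (P⁻¹).det := by rw [← Matrix.det_mul, hQQ]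
  have hdetΩ : 0 < (P⁻¹).det := hΩ.det_pos
  have hQdet_nonneg : 0 ≤ Q.det := by
    rw [hQpsd.isHermitian.det_eq_prod_eigenvalues]
    exact Finset.prod_nonneg fun i _ => hQpsd.eigenvalues_nonneg i
  have hQdet_pos : 0 < Q.det := by
    rcases hQdet_nonneg.lt_or_eq with h | h
    · exact h
    · exfalso
      rw [← h, mul_zero] at hdet2
      exact absurd hdet2.symm (ne_of_gt hdetΩ)
  have hQt : Qᵀ = Q := by
    rw [← Matrix.conjTranspose_eq_transpose_of_trivial]; exact hQpsd.isHermitian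
  have hquad : ∀ x : Fin k → ℝ, x ⬝ᵥ P⁻¹ *ᵥ x = (Q *ᵥ x) ⬝ᵥ (Q *ᵥ x) := by
    intro x
    rw [← hQQ, ← Matrix.mulVec_mulVec, Matrix.dotProduct_mulVec]
    nth_rewrite 1 [← hQt]
    rw [Matrix.vecMul_transpose]
  have h2pi : (0:ℝ) < 2 * Real.pi := by positivity
  have hdetP : 0 < P.det := hP.det_pos
  have hQdet_ne : Q.det ≠ 0 := ne_of_gt hQdet_pos
  have hinv : Invertible Q := Q.invertibleOfIsUnitDet (isUnit_iff_ne_zero.mpr hQdet_ne)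
  let eL : (Fin k → ℝ) ≃ₗ[ℝ] (Fin k → ℝ) := Q.toLinearEquiv' hinv
  let eM : (Fin k → ℝ) ≃ᵐ (Fin k → ℝ) :=
    eL.toContinuousLinearEquiv.toHomeomorph.toMeasurableEquiv
  have heM : (eM : (Fin k → ℝ) → (Fin k → ℝ)) = fun x => Q *ᵥ x := by
    funext x
    show eL x = Q *ᵥ x
    simp [eL, Matrix.toLinearEquiv', Matrix.toLin'_apply]
  have hmapfun : (eM : (Fin k → ℝ) → (Fin k → ℝ))
      = (Matrix.toLin' Q : (Fin k → ℝ) →ₗ[ℝ] (Fin k → ℝ)) := by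
    rw [heM]; funext x; simp [Matrix.toLin'_apply]
  have hmap : Measure.map eM volume = ENNReal.ofReal |Q.det⁻¹| • volume := by
    rw [hmapfun]
    have h1 : LinearMap.det (Matrix.toLin' Q) ≠ 0 := by
      rw [LinearMap.det_toLin']; exact hQdet_ne
    have := Measure.map_linearMap_addHaar_pi_eq_smul_addHaar h1 (volume : Measure (Fin k → ℝ))
    rw [LinearMap.det_toLin'] at this
    exact this
  have key : ∀ g : (Fin k → ℝ) → ℝ, ∫ x, g (Q *ᵥ x) = |Q.det⁻¹| * ∫ y, g y := by
    intro g
    have h1 : ∫ y, g y ∂(Measure.map eM volume) = ∫ x, g (eM x) :=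
      MeasureTheory.integral_map_equiv eM g
    rw [hmap, integral_smul_measure, ENNReal.toReal_ofReal (abs_nonneg _)] at h1
    simp only [heM] at h1
    rw [← h1, smul_eq_mul]
  have hg : ∫ y : Fin k → ℝ, ∏ i, Real.exp (-(1/2:ℝ) * (y i)^2) = Real.sqrt (2*Real.pi) ^ k := by
    rw [MeasureTheory.volume_pi, MeasureTheory.integral_fintype_prod_eq_pow (ι := Fin k)
      (fun t : ℝ => Real.exp (-(1/2:ℝ) * t^2))]
    have : ∫ t : ℝ, Real.exp (-(1/2:ℝ) * t^2) = Real.sqrt (2*Real.pi) := by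
      have := integral_gaussian (1/2 : ℝ)
      simp only [neg_mul] at this ⊢
      rw [this]
      congr 1
      ring
    rw [this, Fintype.card_fin]
  have htrans : ∫ x : Fin k → ℝ, Real.exp (-(1/2:ℝ) * ((x - m) ⬝ᵥ P⁻¹ *ᵥ (x - m)))
      = ∫ x : Fin k → ℝ, Real.exp (-(1/2:ℝ) * (x ⬝ᵥ P⁻¹ *ᵥ x)) :=
    integral_sub_right_eq_self (fun y => Real.exp (-(1/2:ℝ) * (y ⬝ᵥ P⁻¹ *ᵥ y))) m
  have hfac : ∀ x : Fin k → ℝ, Real.exp (-(1/2:ℝ) * (x ⬝ᵥ P⁻¹ *ᵥ x))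
      = ∏ i, Real.exp (-(1/2:ℝ) * ((Q *ᵥ x) i)^2) := by
    intro x
    rw [hquad, ← Real.exp_sum]
    congr 1
    simp only [dotProduct]
    rw [Finset.mul_sum]
    exact Finset.sum_congr rfl fun i _ => by ring
  have hdetsmul : ((2*Real.pi) • P).det = (2*Real.pi)^k * P.det := by
    rw [Matrix.det_smul, Fintype.card_fin]
  have hQdet_eq : Q.det = (Real.sqrt P.det)⁻¹ := by
    have h1 : Real.sqrt ((P⁻¹).det) = Q.det := by
      rw [← hdet2]; exact Real.sqrt_mul_self hQdet_nonneg
    rw [← h1, Matrix.det_nonsing_inv, Ring.inverse_eq_inv', Real.sqrt_inv]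
  have habs : |Q.det⁻¹| = Real.sqrt P.det := by
    rw [abs_of_pos (by positivity), hQdet_eq, inv_inv]
  have hsq : Real.sqrt ((2*Real.pi)^k) = Real.sqrt (2*Real.pi) ^ k := by
    rw [show ((2*Real.pi):ℝ)^k = (Real.sqrt (2*Real.pi) ^ 2)^k by rw [Real.sq_sqrt h2pi.le],
      ← pow_mul, mul_comm 2 k, pow_mul]
    exact Real.sqrt_sq (by positivity)
  have hC : ((2*Real.pi)^k * P.det : ℝ) ^ (-(1/2:ℝ))
      = (Real.sqrt (2*Real.pi) ^ k * Real.sqrt P.det)⁻¹ := by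
    rw [Real.rpow_neg (by positivity), ← Real.sqrt_eq_rpow,
      Real.sqrt_mul (by positivity), hsq]
  calc ∫ x : Fin k → ℝ, gaussN m P x
      = (((2*Real.pi) • P).det) ^ (-(1/2:ℝ)) *
        ∫ x : Fin k → ℝ, Real.exp (-(1/2:ℝ) * ((x - m) ⬝ᵥ P⁻¹ *ᵥ (x - m))) := by
        simp only [gaussN]
        rw [MeasureTheory.integral_const_mul]
    _ = (((2*Real.pi) • P).det) ^ (-(1/2:ℝ)) *
        ∫ x : Fin k → ℝ, ∏ i, Real.exp (-(1/2:ℝ) * ((Q *ᵥ x) i)^2) := by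
        rw [htrans]
        congr 1
        exact integral_congr_ae (Filter.Eventually.of_forall fun x => hfac x)
    _ = (((2*Real.pi) • P).det) ^ (-(1/2:ℝ)) *
        (|Q.det⁻¹| * ∫ y : Fin k → ℝ, ∏ i, Real.exp (-(1/2:ℝ) * (y i)^2)) := by
        congr 1
        exact key (fun y => ∏ i, Real.exp (-(1/2:ℝ) * (y i)^2))
    _ = 1 := by
        rw [hg, hdetsmul, hC, habs, mul_comm (Real.sqrt P.det)]
        rw [inv_mul_cancel₀ (by positivity)]

end Helpers

theorem KL_average_gaussian_CI
    {n : ℕ} (hn : 1 ≤ n) {I : Type*} [Fintype I] [Nonempty I]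
    (m : I → (Fin n → ℝ)) (P : I → Matrix (Fin n) (Fin n) ℝ)
    (hP : ∀ i, (P i).PosDef)
    (ω : I → ℝ) (hω : ∀ i, 0 < ω i) (hωs : ∑ i, ω i = 1)
    (Ωbar Pbar : Matrix (Fin n) (Fin n) ℝ) (mbar : Fin n → ℝ)
    (hΩbar : Ωbar = ∑ i, ω i • (P i)⁻¹)
    (hPbar : Pbar = Ωbar⁻¹)
    (hmbar : mbar = Pbar *ᵥ (∑ i, ω i • ((P i)⁻¹ *ᵥ m i))) :
    Ωbar.PosDef ∧
    (∃ z : ℝ, 0 < z ∧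
      ∀ x : Fin n → ℝ, ∏ i, gaussN (m i) (P i) x ^ ω i = z * gaussN mbar Pbar x) ∧
    ∀ x : Fin n → ℝ,
      (∏ i, gaussN (m i) (P i) x ^ ω i) /
          (∫ y : Fin n → ℝ, ∏ i, gaussN (m i) (P i) y ^ ω i)
        = gaussN mbar Pbar x := by
  classical
  have h2pi : (0:ℝ) < 2 * Real.pi := by positivity
  have hΩi : ∀ i, ((P i)⁻¹).PosDef := fun i => (hP i).inv
  have hΩpd : Ωbar.PosDef := by
    rw [hΩbar]; exact posDef_sum' _ (fun i => posDef_smul' (hΩi i) (hω i))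
  have hΩdet_ne : Ωbar.det ≠ 0 := ne_of_gt hΩpd.det_pos
  have hPbarpd : Pbar.PosDef := by rw [hPbar]; exact hΩpd.inv
  have hPbarinv : Pbar⁻¹ = Ωbar := by rw [hPbar, Matrix.nonsing_inv_nonsing_inv _ (isUnit_iff_ne_zero.mpr hΩdet_ne)]
  have hΩbarH : Ωbar.IsHermitian := hΩpd.isHermitian
  set b : Fin n → ℝ := ∑ i, ω i • ((P i)⁻¹ *ᵥ m i) with hb
  have hΩmbar : Ωbar *ᵥ mbar = b := by
    rw [hmbar, hPbar, Matrix.mulVec_mulVec, Matrix.mul_nonsing_inv _ (isUnit_iff_ne_zero.mpr hΩdet_ne), Matrix.one_mulVec]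
  have h1 : ∀ x : Fin n → ℝ, x ⬝ᵥ Ωbar *ᵥ x = ∑ i, ω i * (x ⬝ᵥ (P i)⁻¹ *ᵥ x) := by
    intro x
    rw [hΩbar, sum_mulVec', dotProduct_sum']
    exact Finset.sum_congr rfl fun i _ => by
      rw [Matrix.smul_mulVec, dotProduct_smul, smul_eq_mul]
  have h2 : ∀ x : Fin n → ℝ, mbar ⬝ᵥ Ωbar *ᵥ x = ∑ i, ω i * (m i ⬝ᵥ (P i)⁻¹ *ᵥ x) := by
    intro x
    rw [dot_symm' hΩbarH, hΩmbar, hb, dotProduct_sum']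
    exact Finset.sum_congr rfl fun i _ => by
      rw [dotProduct_smul, smul_eq_mul, dot_symm' (hΩi i).isHermitian]
  set c : ℝ := (∑ i, ω i * (m i ⬝ᵥ (P i)⁻¹ *ᵥ m i)) - mbar ⬝ᵥ Ωbar *ᵥ mbar with hc
  have hkey : ∀ x : Fin n → ℝ, ∑ i, ω i * ((x - m i) ⬝ᵥ (P i)⁻¹ *ᵥ (x - m i))
      = (x - mbar) ⬝ᵥ Ωbar *ᵥ (x - mbar) + c := by
    intro x
    rw [quad_expand' hΩbarH]
    have e1 : ∀ i : I, ω i * ((x - m i) ⬝ᵥ (P i)⁻¹ *ᵥ (x - m i))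
        = ω i * (x ⬝ᵥ (P i)⁻¹ *ᵥ x) - 2 * (ω i * (m i ⬝ᵥ (P i)⁻¹ *ᵥ x))
          + ω i * (m i ⬝ᵥ (P i)⁻¹ *ᵥ m i) := fun i => by
      rw [quad_expand' (hΩi i).isHermitian]; ring
    rw [Finset.sum_congr rfl (fun i _ => e1 i), Finset.sum_add_distrib,
      Finset.sum_sub_distrib, ← Finset.mul_sum, ← h1, ← h2, hc]
    ring
  have hdi : ∀ i : I, 0 < ((2*Real.pi) • P i).det := fun i => by
    rw [Matrix.det_smul]
    exact mul_pos (pow_pos h2pi _) (hP i).det_pos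
  set dbar : ℝ := ((2*Real.pi) • Pbar).det with hdbar
  have hdbar_pos : 0 < dbar := by
    rw [hdbar, Matrix.det_smul]
    exact mul_pos (pow_pos h2pi _) hPbarpd.det_pos
  set z : ℝ := (∏ i, (((2*Real.pi) • P i).det) ^ (-(1/2:ℝ) * ω i)) * Real.exp (-(1/2:ℝ) * c)
      * dbar ^ ((1/2:ℝ)) with hz
  have hzpos : 0 < z := by
    apply mul_pos (mul_pos ?_ (Real.exp_pos _)) (Real.rpow_pos_of_pos hdbar_pos _)
    exact Finset.prod_pos fun i _ => Real.rpow_pos_of_pos (hdi i) _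
  have hmain : ∀ x : Fin n → ℝ, ∏ i, gaussN (m i) (P i) x ^ ω i = z * gaussN mbar Pbar x := by
    intro x
    simp only [gaussN, hPbarinv]
    rw [show ((2*Real.pi) • Pbar).det = dbar from hdbar.symm]
    have hterm : ∀ i : I, ((((2*Real.pi) • P i).det) ^ (-(1/2:ℝ)) *
        Real.exp (-(1/2:ℝ) * ((x - m i) ⬝ᵥ (P i)⁻¹ *ᵥ (x - m i)))) ^ ω i
        = (((2*Real.pi) • P i).det) ^ (-(1/2:ℝ) * ω i) *
          Real.exp (-(1/2:ℝ) * (ω i * ((x - m i) ⬝ᵥ (P i)⁻¹ *ᵥ (x - m i)))) := fun i => by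
      rw [Real.mul_rpow (Real.rpow_nonneg (hdi i).le _) (le_of_lt (Real.exp_pos _)),
        ← Real.rpow_mul (hdi i).le, ← Real.exp_mul]
      congr 1
      ring
    have hnorm : (-(1 / 2 : ℝ)) = (-(1/2:ℝ)) := rfl
    rw [Finset.prod_congr rfl (fun i _ => hterm i), Finset.prod_mul_distrib, ← Real.exp_sum]
    rw [show ∑ i, -(1/2:ℝ) * (ω i * ((x - m i) ⬝ᵥ (P i)⁻¹ *ᵥ (x - m i)))
        = -(1/2:ℝ) * ∑ i, ω i * ((x - m i) ⬝ᵥ (P i)⁻¹ *ᵥ (x - m i)) from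
        (Finset.mul_sum _ _ _).symm]
    rw [hkey x, mul_add, Real.exp_add, hz]
    have hd12 : dbar ^ ((1/2:ℝ)) * dbar ^ (-(1/2:ℝ)) = 1 := by
      rw [← Real.rpow_add hdbar_pos]; norm_num
    linear_combination (-((∏ i, (((2*Real.pi) • P i).det) ^ (-(1/2:ℝ) * ω i)) *
      Real.exp (-(1/2:ℝ) * ((x - mbar) ⬝ᵥ Ωbar *ᵥ (x - mbar))) *
      Real.exp (-(1/2:ℝ) * c))) * hd12
  refine ⟨hΩpd, ⟨z, hzpos, hmain⟩, ?_⟩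
  intro x
  have hint : ∫ y : Fin n → ℝ, ∏ i, gaussN (m i) (P i) y ^ ω i = z := by
    calc ∫ y : Fin n → ℝ, ∏ i, gaussN (m i) (P i) y ^ ω i
        = ∫ y : Fin n → ℝ, z * gaussN mbar Pbar y :=
          integral_congr_ae (Filter.Eventually.of_forall fun y => hmain y)
      _ = z * ∫ y : Fin n → ℝ, gaussN mbar Pbar y := MeasureTheory.integral_const_mul z _
      _ = z := by rw [gaussN_integral mbar hPbarpd, mul_one]
  rw [hint, hmain x]
  exact mul_div_cancel_left₀ _ (ne_of_gt hzpos)
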